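/- Nonstationary exact solution with α = d₁ + d₂: Let d₁, d₂ be real and d₃ ≠ 0 with d₁ + d₂ ≠ 2d₃, let C₂ be a real constant and F : ℝ → ℝ any differentiable function, and set α = d₁ + d₂. Then the functions u = 1/t − 2(d₁ − d₂)/(x²+y²), v = 1/t + 2(d₁ − d₂)/(x²+y²), w = C₂·exp(−(x²+y²)/(4d₃t))·t^{(d₁+d₂−2d₃)/(2d₃)}·(x²+y²)^{−(d₁+d₂)/(2d₃)} − 2(d₁ − d₂)²/((d₁ + d₂ − 2d₃)(x²+y²)) − 1/t satisfy system (3-1) at every point (t,x,y) with t > 0 and (x,y) ≠ (0,0). -/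

import Mathlib

/-- Partial derivative with respect to `t` of a function of `(t,x,y)`. -/
noncomputable def pdT (f : ℝ × ℝ × ℝ → ℝ) (p : ℝ × ℝ × ℝ) : ℝ := fderiv ℝ f p (1, 0, 0)
/-- Partial derivative with respect to `x`. -/
noncomputable def pdX (f : ℝ × ℝ × ℝ → ℝ) (p : ℝ × ℝ × ℝ) : ℝ := fderiv ℝ f p (0, 1, 0)
/-- Partial derivative with respect to `y`. -/
noncomputable def pdY (f : ℝ × ℝ × ℝ → ℝ) (p : ℝ × ℝ × ℝ) : ℝ := fderiv ℝ f p (0, 0, 1)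

/-- `(u,v,w)` solves system (3-1), the convective Lotka–Volterra system (`k = 1`)
whose stream function is `Ψ = F(x²+y²) + α·arctan(x/y)`; here `F'` denotes the
derivative of `F`. -/
def Solves31 (α d₁ d₂ d₃ : ℝ) (F' : ℝ → ℝ) (u v w : ℝ × ℝ × ℝ → ℝ)
    (Ω : Set (ℝ × ℝ × ℝ)) : Prop :=
  ∀ p ∈ Ω,
    (pdT u p - α * (p.2.1 * pdX u p + p.2.2 * pdY u p) / (p.2.1 ^ 2 + p.2.2 ^ 2)
        + 2 * F' (p.2.1 ^ 2 + p.2.2 ^ 2) * (p.2.1 * pdY u p - p.2.2 * pdX u p)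
      = d₁ * (pdX (pdX u) p + pdY (pdY u) p) - u p * v p) ∧
    (pdT v p - α * (p.2.1 * pdX v p + p.2.2 * pdY v p) / (p.2.1 ^ 2 + p.2.2 ^ 2)
        + 2 * F' (p.2.1 ^ 2 + p.2.2 ^ 2) * (p.2.1 * pdY v p - p.2.2 * pdX v p)
      = d₂ * (pdX (pdX v) p + pdY (pdY v) p) - u p * v p) ∧
    (pdT w p - α * (p.2.1 * pdX w p + p.2.2 * pdY w p) / (p.2.1 ^ 2 + p.2.2 ^ 2)
        + 2 * F' (p.2.1 ^ 2 + p.2.2 ^ 2) * (p.2.1 * pdY w p - p.2.2 * pdX w p)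
      = d₃ * (pdX (pdX w) p + pdY (pdY w) p) + u p * v p)

noncomputable section Aux

def L1 : ℝ × ℝ →L[ℝ] ℝ := ContinuousLinearMap.fst ℝ ℝ ℝ
def L2 : ℝ × ℝ →L[ℝ] ℝ := ContinuousLinearMap.snd ℝ ℝ ℝ

lemma clm_ext2 {L L' : ℝ × ℝ →L[ℝ] ℝ} (h1 : L (1,0) = L' (1,0)) (h2 : L (0,1) = L' (0,1)) :
    L = L' := by
  apply ContinuousLinearMap.ext
  rintro ⟨x, y⟩
  have hv : ((x, y) : ℝ × ℝ) = x • ((1:ℝ), (0:ℝ)) + y • ((0:ℝ), (1:ℝ)) := by simp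
  rw [hv, map_add, map_add, map_smul, map_smul, map_smul, map_smul, h1, h2]

def σ3 : ℝ × ℝ × ℝ → ℝ × ℝ := fun p => (p.1, p.2.1 ^ 2 + p.2.2 ^ 2)

def LX3 : ℝ × ℝ × ℝ →L[ℝ] ℝ :=
  (ContinuousLinearMap.fst ℝ ℝ ℝ).comp (ContinuousLinearMap.snd ℝ ℝ (ℝ × ℝ))
def LY3 : ℝ × ℝ × ℝ →L[ℝ] ℝ :=
  (ContinuousLinearMap.snd ℝ ℝ ℝ).comp (ContinuousLinearMap.snd ℝ ℝ (ℝ × ℝ))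

def Dσ (p : ℝ × ℝ × ℝ) : ℝ × ℝ × ℝ →L[ℝ] ℝ × ℝ :=
  (ContinuousLinearMap.fst ℝ ℝ (ℝ × ℝ)).prod ((2 * p.2.1) • LX3 + (2 * p.2.2) • LY3)

lemma hasFDerivAt_x3 (p : ℝ × ℝ × ℝ) : HasFDerivAt (fun q : ℝ × ℝ × ℝ => q.2.1) LX3 p :=
  hasFDerivAt_fst.comp p hasFDerivAt_snd

lemma hasFDerivAt_y3 (p : ℝ × ℝ × ℝ) : HasFDerivAt (fun q : ℝ × ℝ × ℝ => q.2.2) LY3 p :=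
  hasFDerivAt_snd.comp p hasFDerivAt_snd

lemma hasFDerivAt_σ3 (p : ℝ × ℝ × ℝ) : HasFDerivAt σ3 (Dσ p) p := by
  have hx : HasFDerivAt (fun q : ℝ × ℝ × ℝ => q.2.1 ^ 2 + q.2.2 ^ 2)
      ((p.2.1 • LX3 + p.2.1 • LX3) + (p.2.2 • LY3 + p.2.2 • LY3)) p := by
    have : HasFDerivAt (fun q : ℝ × ℝ × ℝ => q.2.1 * q.2.1 + q.2.2 * q.2.2) _ p := (((hasFDerivAt_x3 p).mul (hasFDerivAt_x3 p)).add
      ((hasFDerivAt_y3 p).mul (hasFDerivAt_y3 p)))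
    simpa [pow_two] using this
  have h := HasFDerivAt.prodMk (hasFDerivAt_fst (p := p)) hx
  refine h.congr_fderiv ?_
  apply ContinuousLinearMap.ext
  intro v
  simp [Dσ, LX3, LY3, Prod.ext_iff]
  ring

end Aux

noncomputable section Machinery

def U3 : Set (ℝ × ℝ × ℝ) := {p | 0 < p.1 ∧ p.2 ≠ 0}

lemma isOpen_U3 : IsOpen U3 :=
  (isOpen_lt continuous_const continuous_fst).inter
    (isOpen_compl_singleton.preimage continuous_snd)

lemma s3_pos {p : ℝ × ℝ × ℝ} (hp : p.2 ≠ 0) : 0 < p.2.1 ^ 2 + p.2.2 ^ 2 := by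
  rcases eq_or_ne p.2.1 0 with h | h
  · have h2 : p.2.2 ≠ 0 := by
      intro h2
      exact hp (Prod.ext_iff.mpr ⟨h, h2⟩)
    positivity
  · positivity

lemma partials (g gt gs gst gss : ℝ × ℝ → ℝ)
    (Hg : ∀ q : ℝ × ℝ, 0 < q.1 → 0 < q.2 → HasFDerivAt g (gt q • L1 + gs q • L2) q)
    (Hgs : ∀ q : ℝ × ℝ, 0 < q.1 → 0 < q.2 → HasFDerivAt gs (gst q • L1 + gss q • L2) q)
    (p : ℝ × ℝ × ℝ) (hp : p ∈ U3) :
    pdT (g ∘ σ3) p = gt (σ3 p) ∧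
    pdX (g ∘ σ3) p = 2 * p.2.1 * gs (σ3 p) ∧
    pdY (g ∘ σ3) p = 2 * p.2.2 * gs (σ3 p) ∧
    pdX (pdX (g ∘ σ3)) p = 2 * gs (σ3 p) + 4 * p.2.1 ^ 2 * gss (σ3 p) ∧
    pdY (pdY (g ∘ σ3)) p = 2 * gs (σ3 p) + 4 * p.2.2 ^ 2 * gss (σ3 p) := by
  have key : ∀ q ∈ U3, HasFDerivAt (g ∘ σ3)
      ((gt (σ3 q) • L1 + gs (σ3 q) • L2).comp (Dσ q)) q := fun q hq =>
    (Hg (σ3 q) hq.1 (s3_pos hq.2)).comp q (hasFDerivAt_σ3 q)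
  have hT : pdT (g ∘ σ3) p = gt (σ3 p) := by
    rw [pdT, (key p hp).fderiv]
    simp [Dσ, L1, L2, LX3, LY3]
  have hX : ∀ q ∈ U3, pdX (g ∘ σ3) q = 2 * q.2.1 * gs (σ3 q) := by
    intro q hq
    rw [pdX, (key q hq).fderiv]
    simp [Dσ, L1, L2, LX3, LY3]
    ring
  have hY : ∀ q ∈ U3, pdY (g ∘ σ3) q = 2 * q.2.2 * gs (σ3 q) := by
    intro q hq
    rw [pdY, (key q hq).fderiv]
    simp [Dσ, L1, L2, LX3, LY3]
    ring
  have hGs : HasFDerivAt (fun q : ℝ × ℝ × ℝ => gs (σ3 q))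
      ((gst (σ3 p) • L1 + gss (σ3 p) • L2).comp (Dσ p)) p :=
    (Hgs (σ3 p) hp.1 (s3_pos hp.2)).comp p (hasFDerivAt_σ3 p)
  refine ⟨hT, hX p hp, hY p hp, ?_, ?_⟩
  · have hev : pdX (g ∘ σ3) =ᶠ[nhds p] fun q => 2 * q.2.1 * gs (σ3 q) := by
      filter_upwards [isOpen_U3.mem_nhds hp] with q hq using hX q hq
    have hmul : HasFDerivAt (fun q : ℝ × ℝ × ℝ => 2 * q.2.1 * gs (σ3 q)) _ p := ((hasFDerivAt_x3 p).const_mul 2).mul hGs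
    have e1 : pdX (pdX (g ∘ σ3)) p
        = fderiv ℝ (fun q : ℝ × ℝ × ℝ => 2 * q.2.1 * gs (σ3 q)) p (0, 1, 0) := by
      rw [show pdX (pdX (g ∘ σ3)) p = fderiv ℝ (pdX (g ∘ σ3)) p (0, 1, 0) from rfl,
        hev.fderiv_eq]
    rw [e1, hmul.fderiv]
    simp [Dσ, L1, L2, LX3, LY3]
    ring
  · have hev : pdY (g ∘ σ3) =ᶠ[nhds p] fun q => 2 * q.2.2 * gs (σ3 q) := by
      filter_upwards [isOpen_U3.mem_nhds hp] with q hq using hY q hq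
    have hmul : HasFDerivAt (fun q : ℝ × ℝ × ℝ => 2 * q.2.2 * gs (σ3 q)) _ p := ((hasFDerivAt_y3 p).const_mul 2).mul hGs
    have e1 : pdY (pdY (g ∘ σ3)) p
        = fderiv ℝ (fun q : ℝ × ℝ × ℝ => 2 * q.2.2 * gs (σ3 q)) p (0, 0, 1) := by
      rw [show pdY (pdY (g ∘ σ3)) p = fderiv ℝ (pdY (g ∘ σ3)) p (0, 0, 1) from rfl,
        hev.fderiv_eq]
    rw [e1, hmul.fderiv]
    simp [Dσ, L1, L2, LX3, LY3]
    ring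

end Machinery

noncomputable section UV

lemma compFst {φ : ℝ → ℝ} {φ' : ℝ} {q : ℝ × ℝ} (h : HasDerivAt φ φ' q.1) :
    HasFDerivAt (fun q : ℝ × ℝ => φ q.1) (φ' • L1) q :=
  h.comp_hasFDerivAt q hasFDerivAt_fst

lemma compSnd {φ : ℝ → ℝ} {φ' : ℝ} {q : ℝ × ℝ} (h : HasDerivAt φ φ' q.2) :
    HasFDerivAt (fun q : ℝ × ℝ => φ q.2) (φ' • L2) q :=
  h.comp_hasFDerivAt q hasFDerivAt_snd

lemma HgUV (c : ℝ) (q : ℝ × ℝ) (h1 : 0 < q.1) (h2 : 0 < q.2) :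
    HasFDerivAt (fun q : ℝ × ℝ => 1 / q.1 + c / q.2)
      ((-(1 / q.1 ^ 2)) • L1 + (-(c / q.2 ^ 2)) • L2) q := by
  have ha : HasFDerivAt (fun q : ℝ × ℝ => (q.1)⁻¹) ((-(q.1 ^ 2)⁻¹) • L1) q :=
    compFst (hasDerivAt_inv h1.ne')
  have hb := (compSnd (q := q) (hasDerivAt_inv h2.ne')).const_mul c
  have H : HasFDerivAt (fun q : ℝ × ℝ => (q.1)⁻¹ + c * (q.2)⁻¹) _ q := ha.add hb
  have hfun : (fun q : ℝ × ℝ => (q.1)⁻¹ + c * (q.2)⁻¹)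
      = fun q : ℝ × ℝ => 1 / q.1 + c / q.2 := by
    funext q; ring
  rw [show (fun y : ℝ × ℝ => y.1⁻¹ + c * y.2⁻¹) = fun q : ℝ × ℝ => 1 / q.1 + c / q.2
    from hfun] at H
  refine H.congr_fderiv (clm_ext2 ?_ ?_) <;>
    simp [L1, L2] <;> field_simp

lemma HgsUV (c : ℝ) (q : ℝ × ℝ) (h1 : 0 < q.1) (h2 : 0 < q.2) :
    HasFDerivAt (fun q : ℝ × ℝ => -(c / q.2 ^ 2))
      ((0 : ℝ) • L1 + (2 * c / q.2 ^ 3) • L2) q := by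
  have hb : HasDerivAt (fun z : ℝ => z ^ 2) (2 * q.2) q.2 := by
    simpa using hasDerivAt_pow 2 q.2
  have hinv := (hb.inv (pow_ne_zero 2 h2.ne'))
  have H : HasFDerivAt (fun q : ℝ × ℝ => -(c * ((q.2) ^ 2)⁻¹)) _ q := ((compSnd (q := q) hinv).const_mul c).neg
  have hfun : (fun q : ℝ × ℝ => -(c * ((q.2) ^ 2)⁻¹))
      = fun q : ℝ × ℝ => -(c / q.2 ^ 2) := by
    funext q; ring
  rw [hfun] at H
  refine H.congr_fderiv (clm_ext2 ?_ ?_) <;> simp [L1, L2] <;> field_simp <;> ring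

end UV


noncomputable section Wpart

lemma inner_deriv (e : ℝ) (he : e ≠ 0) (q : ℝ × ℝ) (h1 : 0 < q.1) :
    HasFDerivAt (fun q : ℝ × ℝ => -q.2 / (e * q.1))
      ((q.2 / (e * q.1 ^ 2)) • L1 + (-(1 / (e * q.1))) • L2) q := by
  have hden : HasDerivAt (fun z : ℝ => (e * z)⁻¹) (-e / (e * q.1) ^ 2) q.1 := by
    have h : HasDerivAt (fun z : ℝ => (e * z)⁻¹) (-(e * 1) / (e * q.1) ^ 2) q.1 :=
      (((hasDerivAt_id q.1).const_mul e).inv (mul_ne_zero he h1.ne'))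
    simpa using h
  have hm1 : HasFDerivAt (fun q : ℝ × ℝ => -q.2) (-L2) q := hasFDerivAt_snd.neg
  have hm2 : HasFDerivAt (fun q : ℝ × ℝ => (e * q.1)⁻¹) ((-e / (e * q.1) ^ 2) • L1) q :=
    compFst hden
  have H : HasFDerivAt (fun q : ℝ × ℝ => -q.2 * (e * q.1)⁻¹) _ q := hm1.mul hm2
  have hfun : (fun q : ℝ × ℝ => -q.2 * (e * q.1)⁻¹)
      = fun q : ℝ × ℝ => -q.2 / (e * q.1) := by
    funext q; ring
  rw [hfun] at H
  refine H.congr_fderiv (clm_ext2 ?_ ?_) <;> simp [L1, L2] <;>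
    field_simp <;> ring

lemma hasFDerivAt_W (C a b e : ℝ) (he : e ≠ 0) (q : ℝ × ℝ) (h1 : 0 < q.1) (h2 : 0 < q.2) :
    HasFDerivAt (fun q : ℝ × ℝ => C * Real.exp (-q.2 / (e * q.1)) * q.1 ^ a * q.2 ^ b)
      ((C * Real.exp (-q.2 / (e * q.1)) * q.1 ^ a * q.2 ^ b * (q.2 / (e * q.1 ^ 2) + a / q.1)) • L1 +
       (C * Real.exp (-q.2 / (e * q.1)) * q.1 ^ a * q.2 ^ b * (-(1 / (e * q.1)) + b / q.2)) • L2) q := by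
  have hE : HasFDerivAt (fun q : ℝ × ℝ => Real.exp (-q.2 / (e * q.1)))
      (Real.exp (-q.2 / (e * q.1)) •
        ((q.2 / (e * q.1 ^ 2)) • L1 + (-(1 / (e * q.1))) • L2)) q :=
    (Real.hasDerivAt_exp _).comp_hasFDerivAt q (inner_deriv e he q h1)
  have hA : HasFDerivAt (fun q : ℝ × ℝ => q.1 ^ a) ((a * q.1 ^ (a - 1)) • L1) q :=
    compFst (Real.hasDerivAt_rpow_const (Or.inl h1.ne'))
  have hB : HasFDerivAt (fun q : ℝ × ℝ => q.2 ^ b) ((b * q.2 ^ (b - 1)) • L2) q :=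
    compSnd (Real.hasDerivAt_rpow_const (Or.inl h2.ne'))
  have H := ((hE.const_mul C).mul hA).mul hB
  refine H.congr_fderiv (clm_ext2 ?_ ?_) <;>
    simp only [ContinuousLinearMap.add_apply, ContinuousLinearMap.coe_smul', Pi.smul_apply,
      ContinuousLinearMap.coe_comp', Function.comp_apply, smul_eq_mul, L1, L2,
      ContinuousLinearMap.coe_fst', ContinuousLinearMap.coe_snd'] <;>
    simp [Real.rpow_sub_one h1.ne', Real.rpow_sub_one h2.ne'] <;>
    field_simp [Real.rpow_sub_one h1.ne', Real.rpow_sub_one h2.ne'] <;> ring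

lemma Hgw (C a b e κ N : ℝ) (he : e ≠ 0) (hκ : κ ≠ 0) (q : ℝ × ℝ)
    (h1 : 0 < q.1) (h2 : 0 < q.2) :
    HasFDerivAt (fun q : ℝ × ℝ =>
        C * Real.exp (-q.2 / (e * q.1)) * q.1 ^ a * q.2 ^ b - N / (κ * q.2) - 1 / q.1)
      ((C * Real.exp (-q.2 / (e * q.1)) * q.1 ^ a * q.2 ^ b * (q.2 / (e * q.1 ^ 2) + a / q.1)
          + 1 / q.1 ^ 2) • L1 +
       (C * Real.exp (-q.2 / (e * q.1)) * q.1 ^ a * q.2 ^ b * (-(1 / (e * q.1)) + b / q.2)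
          + (N / κ) / q.2 ^ 2) • L2) q := by
  have hW := hasFDerivAt_W C a b e he q h1 h2
  have hder : HasDerivAt (fun z : ℝ => N * (κ * z)⁻¹) (N * (-(κ * 1) / (κ * q.2) ^ 2)) q.2 :=
    (((hasDerivAt_id q.2).const_mul κ).inv (mul_ne_zero hκ h2.ne')).const_mul N
  have hterm2 := compSnd (q := q) hder
  have hterm3 : HasFDerivAt (fun q : ℝ × ℝ => (q.1)⁻¹) ((-(q.1 ^ 2)⁻¹) • L1) q :=
    compFst (hasDerivAt_inv h1.ne')
  have H : HasFDerivAt (fun q : ℝ × ℝ =>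
      C * Real.exp (-q.2 / (e * q.1)) * q.1 ^ a * q.2 ^ b - N * (κ * q.2)⁻¹ - (q.1)⁻¹) _ q :=
    (hW.sub hterm2).sub hterm3
  have hfun : (fun q : ℝ × ℝ =>
      C * Real.exp (-q.2 / (e * q.1)) * q.1 ^ a * q.2 ^ b - N * (κ * q.2)⁻¹ - (q.1)⁻¹)
      = fun q : ℝ × ℝ =>
      C * Real.exp (-q.2 / (e * q.1)) * q.1 ^ a * q.2 ^ b - N / (κ * q.2) - 1 / q.1 := by
    funext q; ring
  rw [hfun] at H
  refine H.congr_fderiv (clm_ext2 ?_ ?_) <;> simp [L1, L2] <;> field_simp <;> ring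

lemma Hgsw (C a b e κ N : ℝ) (he : e ≠ 0) (hκ : κ ≠ 0) (q : ℝ × ℝ)
    (h1 : 0 < q.1) (h2 : 0 < q.2) :
    HasFDerivAt (fun q : ℝ × ℝ =>
        C * Real.exp (-q.2 / (e * q.1)) * q.1 ^ a * q.2 ^ b * (-(1 / (e * q.1)) + b / q.2)
          + (N / κ) / q.2 ^ 2)
      ((C * Real.exp (-q.2 / (e * q.1)) * q.1 ^ a * q.2 ^ b *
          ((q.2 / (e * q.1 ^ 2) + a / q.1) * (-(1 / (e * q.1)) + b / q.2)
            + 1 / (e * q.1 ^ 2))) • L1 +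
       (C * Real.exp (-q.2 / (e * q.1)) * q.1 ^ a * q.2 ^ b *
          ((-(1 / (e * q.1)) + b / q.2) ^ 2 - b / q.2 ^ 2)
          - 2 * (N / κ) / q.2 ^ 3) • L2) q := by
  have hW := hasFDerivAt_W C a b e he q h1 h2
  have hden : HasDerivAt (fun z : ℝ => (e * z)⁻¹) (-(e * 1) / (e * q.1) ^ 2) q.1 :=
    ((hasDerivAt_id q.1).const_mul e).inv (mul_ne_zero he h1.ne')
  have hi1 := (compFst (q := q) hden).neg
  have hi2 := (compSnd (q := q) (hasDerivAt_inv h2.ne')).const_mul b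
  have hInner : HasFDerivAt (fun q : ℝ × ℝ => -(e * q.1)⁻¹ + b * (q.2)⁻¹) _ q := hi1.add hi2
  have hfun1 : (fun q : ℝ × ℝ => -(e * q.1)⁻¹ + b * (q.2)⁻¹)
      = fun q : ℝ × ℝ => -(1 / (e * q.1)) + b / q.2 := by funext q; ring
  rw [hfun1] at hInner
  have hb2 : HasDerivAt (fun z : ℝ => z ^ 2) (2 * q.2) q.2 := by
    simpa using hasDerivAt_pow 2 q.2
  have hK2 := compSnd (q := q) ((hb2.inv (pow_ne_zero 2 h2.ne')).const_mul (N / κ))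
  have H : HasFDerivAt (fun q : ℝ × ℝ =>
      C * Real.exp (-q.2 / (e * q.1)) * q.1 ^ a * q.2 ^ b * (-(1 / (e * q.1)) + b / q.2)
        + N / κ * ((q.2) ^ 2)⁻¹) _ q := (hW.mul hInner).add hK2
  have hfun2 : (fun q : ℝ × ℝ =>
      C * Real.exp (-q.2 / (e * q.1)) * q.1 ^ a * q.2 ^ b * (-(1 / (e * q.1)) + b / q.2)
        + N / κ * ((q.2) ^ 2)⁻¹)
      = fun q : ℝ × ℝ =>
      C * Real.exp (-q.2 / (e * q.1)) * q.1 ^ a * q.2 ^ b * (-(1 / (e * q.1)) + b / q.2)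
        + (N / κ) / q.2 ^ 2 := by
    funext q; ring
  rw [hfun2] at H
  refine H.congr_fderiv (clm_ext2 ?_ ?_) <;> simp [L1, L2] <;> field_simp <;> ring

end Wpart


set_option maxHeartbeats 1000000 in
lemma wcore (d₁ d₂ d₃ t s Fp W : ℝ) (ht : t ≠ 0) (hd₃ : d₃ ≠ 0)
    (hκ : d₁ + d₂ - 2 * d₃ ≠ 0) (hs : s ≠ 0) :
    (W * (s / (4 * d₃ * t ^ 2) + ((d₁ + d₂ - 2 * d₃) / (2 * d₃)) / t) + 1 / t ^ 2) - (d₁ + d₂) * (2 * s * (W * (-(1 / (4 * d₃ * t)) + (-((d₁ + d₂) / (2 * d₃))) / s) + (2 * (d₁ - d₂) ^ 2 / (d₁ + d₂ - 2 * d₃)) / s ^ 2)) / s + 2 * Fp * 0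
      = d₃ * (4 * (W * (-(1 / (4 * d₃ * t)) + (-((d₁ + d₂) / (2 * d₃))) / s) + (2 * (d₁ - d₂) ^ 2 / (d₁ + d₂ - 2 * d₃)) / s ^ 2) + 4 * s * (W * ((-(1 / (4 * d₃ * t)) + (-((d₁ + d₂) / (2 * d₃))) / s) ^ 2 - (-((d₁ + d₂) / (2 * d₃))) / s ^ 2) - 2 * (2 * (d₁ - d₂) ^ 2 / (d₁ + d₂ - 2 * d₃)) / s ^ 3))
        + (1 / t + -(2 * (d₁ - d₂)) / s) * (1 / t + 2 * (d₁ - d₂) / s) := by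
  have hκ2 : d₁ + d₂ - d₃ * 2 ≠ 0 := by intro h; apply hκ; linarith
  field_simp
  ring

set_option maxHeartbeats 1000000 in
/-- Nonstationary exact solution with `α = d₁ + d₂` (and `d₁ + d₂ ≠ 2d₃`):
`u = 1/t − 2(d₁−d₂)/(x²+y²)`, `v = 1/t + 2(d₁−d₂)/(x²+y²)`,
`w = C₂·exp(−(x²+y²)/(4d₃t))·t^{(d₁+d₂−2d₃)/(2d₃)}·(x²+y²)^{−(d₁+d₂)/(2d₃)}
     − 2(d₁−d₂)²/((d₁+d₂−2d₃)(x²+y²)) − 1/t`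
solve system (3-1) with `α = d₁ + d₂` for `t > 0`, `(x,y) ≠ (0,0)`. -/
theorem nonstationary_solution_alpha_d1_plus_d2
    (d₁ d₂ d₃ C₂ : ℝ) (hd₃ : d₃ ≠ 0) (hsum : d₁ + d₂ ≠ 2 * d₃)
    (F : ℝ → ℝ) (hF : Differentiable ℝ F) :
    Solves31 (d₁ + d₂) d₁ d₂ d₃ (deriv F)
      (fun p => 1 / p.1 - 2 * (d₁ - d₂) / (p.2.1 ^ 2 + p.2.2 ^ 2))
      (fun p => 1 / p.1 + 2 * (d₁ - d₂) / (p.2.1 ^ 2 + p.2.2 ^ 2))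
      (fun p => C₂ * Real.exp (-(p.2.1 ^ 2 + p.2.2 ^ 2) / (4 * d₃ * p.1))
          * p.1 ^ ((d₁ + d₂ - 2 * d₃) / (2 * d₃))
          * (p.2.1 ^ 2 + p.2.2 ^ 2) ^ (-((d₁ + d₂) / (2 * d₃)))
        - 2 * (d₁ - d₂) ^ 2 / ((d₁ + d₂ - 2 * d₃) * (p.2.1 ^ 2 + p.2.2 ^ 2))
        - 1 / p.1)
      {p : ℝ × ℝ × ℝ | 0 < p.1 ∧ p.2 ≠ 0} := by
  have hκ : d₁ + d₂ - 2 * d₃ ≠ 0 := sub_ne_zero.mpr hsum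
  have he : (4 : ℝ) * d₃ ≠ 0 := mul_ne_zero four_ne_zero hd₃
  intro p hp
  have ht : (0 : ℝ) < p.1 := hp.1
  have hs : 0 < p.2.1 ^ 2 + p.2.2 ^ 2 := s3_pos hp.2
  obtain ⟨uT, uX, uY, uXX, uYY⟩ :=
    partials (fun q => 1 / q.1 + -(2 * (d₁ - d₂)) / q.2)
      (fun q => -(1 / q.1 ^ 2)) (fun q => -(-(2 * (d₁ - d₂)) / q.2 ^ 2))
      (fun _ => 0) (fun q => 2 * -(2 * (d₁ - d₂)) / q.2 ^ 3)
      (fun q h1 h2 => HgUV _ q h1 h2) (fun q h1 h2 => HgsUV _ q h1 h2) p hp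
  obtain ⟨vT, vX, vY, vXX, vYY⟩ :=
    partials (fun q => 1 / q.1 + 2 * (d₁ - d₂) / q.2)
      (fun q => -(1 / q.1 ^ 2)) (fun q => -(2 * (d₁ - d₂) / q.2 ^ 2))
      (fun _ => 0) (fun q => 2 * (2 * (d₁ - d₂)) / q.2 ^ 3)
      (fun q h1 h2 => HgUV _ q h1 h2) (fun q h1 h2 => HgsUV _ q h1 h2) p hp
  obtain ⟨wT, wX, wY, wXX, wYY⟩ :=
    partials
      (fun q => C₂ * Real.exp (-q.2 / (4 * d₃ * q.1)) * q.1 ^ ((d₁ + d₂ - 2 * d₃) / (2 * d₃))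
          * q.2 ^ (-((d₁ + d₂) / (2 * d₃)))
          - 2 * (d₁ - d₂) ^ 2 / ((d₁ + d₂ - 2 * d₃) * q.2) - 1 / q.1)
      (fun q => C₂ * Real.exp (-q.2 / (4 * d₃ * q.1)) * q.1 ^ ((d₁ + d₂ - 2 * d₃) / (2 * d₃))
          * q.2 ^ (-((d₁ + d₂) / (2 * d₃)))
          * (q.2 / (4 * d₃ * q.1 ^ 2) + ((d₁ + d₂ - 2 * d₃) / (2 * d₃)) / q.1) + 1 / q.1 ^ 2)
      (fun q => C₂ * Real.exp (-q.2 / (4 * d₃ * q.1)) * q.1 ^ ((d₁ + d₂ - 2 * d₃) / (2 * d₃))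
          * q.2 ^ (-((d₁ + d₂) / (2 * d₃)))
          * (-(1 / (4 * d₃ * q.1)) + (-((d₁ + d₂) / (2 * d₃))) / q.2)
          + (2 * (d₁ - d₂) ^ 2 / (d₁ + d₂ - 2 * d₃)) / q.2 ^ 2)
      (fun q => C₂ * Real.exp (-q.2 / (4 * d₃ * q.1)) * q.1 ^ ((d₁ + d₂ - 2 * d₃) / (2 * d₃))
          * q.2 ^ (-((d₁ + d₂) / (2 * d₃)))
          * ((q.2 / (4 * d₃ * q.1 ^ 2) + ((d₁ + d₂ - 2 * d₃) / (2 * d₃)) / q.1)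
              * (-(1 / (4 * d₃ * q.1)) + (-((d₁ + d₂) / (2 * d₃))) / q.2)
            + 1 / (4 * d₃ * q.1 ^ 2)))
      (fun q => C₂ * Real.exp (-q.2 / (4 * d₃ * q.1)) * q.1 ^ ((d₁ + d₂ - 2 * d₃) / (2 * d₃))
          * q.2 ^ (-((d₁ + d₂) / (2 * d₃)))
          * ((-(1 / (4 * d₃ * q.1)) + (-((d₁ + d₂) / (2 * d₃))) / q.2) ^ 2
              - (-((d₁ + d₂) / (2 * d₃))) / q.2 ^ 2)
          - 2 * (2 * (d₁ - d₂) ^ 2 / (d₁ + d₂ - 2 * d₃)) / q.2 ^ 3)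
      (fun q h1 h2 => Hgw C₂ _ _ _ _ _ he hκ q h1 h2)
      (fun q h1 h2 => Hgsw C₂ _ _ _ _ _ he hκ q h1 h2) p hp
  have hu : (fun p : ℝ × ℝ × ℝ => 1 / p.1 - 2 * (d₁ - d₂) / (p.2.1 ^ 2 + p.2.2 ^ 2))
      = (fun q : ℝ × ℝ => 1 / q.1 + -(2 * (d₁ - d₂)) / q.2) ∘ σ3 := by
    funext r
    show _ = 1 / r.1 + -(2 * (d₁ - d₂)) / (r.2.1 ^ 2 + r.2.2 ^ 2)
    ring
  have hv : (fun p : ℝ × ℝ × ℝ => 1 / p.1 + 2 * (d₁ - d₂) / (p.2.1 ^ 2 + p.2.2 ^ 2))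
      = (fun q : ℝ × ℝ => 1 / q.1 + 2 * (d₁ - d₂) / q.2) ∘ σ3 := rfl
  have hw : (fun p : ℝ × ℝ × ℝ => C₂ * Real.exp (-(p.2.1 ^ 2 + p.2.2 ^ 2) / (4 * d₃ * p.1))
          * p.1 ^ ((d₁ + d₂ - 2 * d₃) / (2 * d₃))
          * (p.2.1 ^ 2 + p.2.2 ^ 2) ^ (-((d₁ + d₂) / (2 * d₃)))
        - 2 * (d₁ - d₂) ^ 2 / ((d₁ + d₂ - 2 * d₃) * (p.2.1 ^ 2 + p.2.2 ^ 2))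
        - 1 / p.1)
      = (fun q : ℝ × ℝ => C₂ * Real.exp (-q.2 / (4 * d₃ * q.1))
          * q.1 ^ ((d₁ + d₂ - 2 * d₃) / (2 * d₃)) * q.2 ^ (-((d₁ + d₂) / (2 * d₃)))
          - 2 * (d₁ - d₂) ^ 2 / ((d₁ + d₂ - 2 * d₃) * q.2) - 1 / q.1) ∘ σ3 := rfl
  rw [hu, hv, hw]
  refine ⟨?_, ?_, ?_⟩
  · rw [uT, uX, uY, uXX, uYY]
    simp only [Function.comp_apply, σ3]
    field_simp
    ring
  · rw [vT, vX, vY, vXX, vYY]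
    simp only [Function.comp_apply, σ3]
    field_simp
    ring
  · rw [wT, wX, wY, wXX, wYY]
    simp only [Function.comp_apply, σ3]
    have hgeo1 : ∀ G : ℝ, p.2.1 * (2 * p.2.1 * G) + p.2.2 * (2 * p.2.2 * G)
        = 2 * (p.2.1 ^ 2 + p.2.2 ^ 2) * G := by intro G; ring
    have hgeo2 : ∀ G : ℝ, p.2.1 * (2 * p.2.2 * G) - p.2.2 * (2 * p.2.1 * G) = 0 := by
      intro G; ring
    have hgeo3 : ∀ G R : ℝ, 2 * G + 4 * p.2.1 ^ 2 * R + (2 * G + 4 * p.2.2 ^ 2 * R)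
        = 4 * G + 4 * (p.2.1 ^ 2 + p.2.2 ^ 2) * R := by intro G R; ring
    rw [hgeo1, hgeo2, hgeo3]
    exact wcore d₁ d₂ d₃ p.1 (p.2.1 ^ 2 + p.2.2 ^ 2) (deriv F (p.2.1 ^ 2 + p.2.2 ^ 2))
      (C₂ * Real.exp (-(p.2.1 ^ 2 + p.2.2 ^ 2) / (4 * d₃ * p.1))
        * p.1 ^ ((d₁ + d₂ - 2 * d₃) / (2 * d₃))
        * (p.2.1 ^ 2 + p.2.2 ^ 2) ^ (-((d₁ + d₂) / (2 * d₃))))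
      ht.ne' hd₃ hκ hs.ne'
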